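/- arXiv:1610.08457 — 2 statements merged into one kernel-verified Lean document; each statement's English description precedes it below -/
import Mathlib

section
/- Let f : X → Y be a morphism in C_I(P) between minimal projective complexes. If there exists t > 0 such that X^j = 0 for all j < -t, X^1 ≠ 0, Y^{-(t+1)} ≠ 0, and Y^1 = 0, then f is not irreducible. -/
/-! Statement 4: Lemma 1(d) of the paper. -/

open CategoryTheory CategoryTheory.Limits

namespace ARShapes

variable {Λ : Type} [Ring Λ]

/-- Cochain complexes of (right) `Λ`-modules, i.e. `Λᵐᵒᵖ`-modules, indexed by `ℤ`. -/
abbrev Cplx (Λ : Type) [Ring Λ] : Type 1 := CochainComplex (ModuleCat Λᵐᵒᵖ) ℤ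

/-- A minimal projective complex: a complex of finitely generated projective right
`Λ`-modules whose differentials have image contained in the radical of the target. -/
def IsMinimalProjective (X : Cplx Λ) : Prop :=
  (∀ i : ℤ, Module.Finite Λᵐᵒᵖ (X.X i)) ∧ (∀ i : ℤ, Module.Projective Λᵐᵒᵖ (X.X i)) ∧
    (∀ i : ℤ, LinearMap.range (X.d i (i + 1)).hom ≤
      (Ideal.jacobson (⊥ : Ideal Λᵐᵒᵖ)) • (⊤ : Submodule Λᵐᵒᵖ (X.X (i + 1))))

/-- Irreducibility of a morphism in the category `P` of finitely generated projective
right `Λ`-modules (a full subcategory of all modules). -/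
def IrreducibleP {M N : ModuleCat Λᵐᵒᵖ} (φ : M ⟶ N) : Prop :=
  ¬ IsSplitMono φ ∧ ¬ IsSplitEpi φ ∧
    ∀ (Z : ModuleCat Λᵐᵒᵖ), Module.Finite Λᵐᵒᵖ Z → Module.Projective Λᵐᵒᵖ Z →
      ∀ (g : M ⟶ Z) (h : Z ⟶ N), φ = g ≫ h → IsSplitMono g ∨ IsSplitEpi h

/-- A chain map is smonic if all of its components are split monomorphisms. -/
def Smonic {X Y : Cplx Λ} (f : X ⟶ Y) : Prop := ∀ i : ℤ, IsSplitMono (f.f i)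

/-- A chain map is sepic if all of its components are split epimorphisms. -/
def Sepic {X Y : Cplx Λ} (f : X ⟶ Y) : Prop := ∀ i : ℤ, IsSplitEpi (f.f i)

/-- A chain map is sirreducible if there is exactly one index `i₀` where the component is
irreducible in the category of finitely generated projective modules, the components in lower
degrees being split epimorphisms and those in higher degrees split monomorphisms.  (Since an
irreducible morphism is neither a split monomorphism nor a split epimorphism, the uniqueness
of such an index is automatic.) -/
def Sirreducible {X Y : Cplx Λ} (f : X ⟶ Y) : Prop :=
  ∃ i₀ : ℤ, IrreducibleP (f.f i₀) ∧ (∀ i : ℤ, i < i₀ → IsSplitEpi (f.f i)) ∧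
    (∀ i : ℤ, i₀ < i → IsSplitMono (f.f i))

/-- Irreducibility of a chain map in the category `C_I(P)` of minimal projective
complexes (a full subcategory of all complexes). -/
def IrreducibleC {X Y : Cplx Λ} (f : X ⟶ Y) : Prop :=
  ¬ IsSplitMono f ∧ ¬ IsSplitEpi f ∧
    ∀ (Z : Cplx Λ), IsMinimalProjective Z →
      ∀ (g : X ⟶ Z) (h : Z ⟶ Y), f = g ≫ h → IsSplitMono g ∨ IsSplitEpi h

section Aux
variable (X Y : Cplx Λ)

def Zobj : ℤ → ModuleCat Λᵐᵒᵖ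
  | Int.ofNat 0 => X.X 0
  | Int.ofNat (n+1) => Y.X (Int.ofNat (n+1))
  | Int.negSucc n => X.X (Int.negSucc n)

lemma Zobj_nonpos : ∀ (j : ℤ), j ≤ 0 → Zobj X Y j = X.X j
  | Int.ofNat 0, _ => rfl
  | Int.ofNat (n+1), h => absurd h (by rw [Int.ofNat_eq_natCast]; omega)
  | Int.negSucc n, _ => rfl

def dAux : ∀ i : ℤ, Zobj X Y i ⟶ Zobj X Y (i+1)
  | Int.ofNat 0 => 0
  | Int.ofNat (n+1) => Y.d (Int.ofNat (n+1)) (Int.ofNat (n+2))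
  | Int.negSucc 0 => X.d (Int.negSucc 0) (Int.ofNat 0)
  | Int.negSucc (n+1) => X.d (Int.negSucc (n+1)) (Int.negSucc n)

def Zc : Cplx Λ where
  X := Zobj X Y
  d i j := if h : i + 1 = j then dAux X Y i ≫ eqToHom (congrArg (Zobj X Y) h) else 0
  shape i j hij := dif_neg hij
  d_comp_d' i j k hij hjk := by
    simp only [ComplexShape.up_Rel] at hij hjk
    subst hij; subst hjk
    beta_reduce
    rw [dif_pos rfl, dif_pos rfl]
    simp only [eqToHom_refl, Category.comp_id]
    match i with
    | Int.ofNat 0 => show (0 : _) ≫ _ = 0; simp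
    | Int.ofNat (n+1) =>
        show Y.d (Int.ofNat (n+1)) (Int.ofNat (n+2)) ≫ Y.d (Int.ofNat (n+2)) (Int.ofNat (n+3)) = 0
        exact Y.d_comp_d _ _ _
    | Int.negSucc 0 =>
        show X.d (Int.negSucc 0) (Int.ofNat 0) ≫ (0 : _) = 0; simp
    | Int.negSucc (n+1) =>
        match n with
        | 0 =>
          show X.d (Int.negSucc 1) (Int.negSucc 0) ≫ X.d (Int.negSucc 0) (Int.ofNat 0) = 0
          exact X.d_comp_d _ _ _
        | Nat.succ m =>
          show X.d (Int.negSucc (m+2)) (Int.negSucc (m+1)) ≫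
            X.d (Int.negSucc (m+1)) (Int.negSucc m) = 0
          exact X.d_comp_d _ _ _

lemma Zc_d (i : ℤ) : (Zc X Y).d i (i+1) = dAux X Y i := by
  show (if h : i + 1 = i + 1 then dAux X Y i ≫ eqToHom (congrArg (Zobj X Y) h)
    else (0 : Zobj X Y i ⟶ Zobj X Y (i+1))) = _
  rw [dif_pos rfl]
  simp

lemma Zc_min (hX : IsMinimalProjective X) (hY : IsMinimalProjective Y) :
    IsMinimalProjective (Zc X Y) := by
  refine ⟨fun i => ?_, fun i => ?_, fun i => ?_⟩
  · match i with
    | Int.ofNat 0 => exact hX.1 0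
    | Int.ofNat (n+1) => exact hY.1 _
    | Int.negSucc n => exact hX.1 _
  · match i with
    | Int.ofNat 0 => exact hX.2.1 0
    | Int.ofNat (n+1) => exact hY.2.1 _
    | Int.negSucc n => exact hX.2.1 _
  · rw [Zc_d]
    match i with
    | Int.ofNat 0 =>
        show LinearMap.range (0 : (Zobj X Y 0) →ₗ[Λᵐᵒᵖ] _) ≤ _
        rw [LinearMap.range_zero]; exact bot_le
    | Int.ofNat (n+1) => exact hY.2.2 (Int.ofNat (n+1))
    | Int.negSucc 0 => exact hX.2.2 (Int.negSucc 0)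
    | Int.negSucc (n+1) => exact hX.2.2 (Int.negSucc (n+1))

variable (f : X ⟶ Y)

def gmap (h₄ : IsZero (Y.X 1)) : X ⟶ Zc X Y where
  f i := match i with
    | Int.ofNat 0 => 𝟙 (X.X 0)
    | Int.ofNat (n+1) => f.f (Int.ofNat (n+1))
    | Int.negSucc n => 𝟙 (X.X (Int.negSucc n))
  comm' i j hij := by
    simp only [ComplexShape.up_Rel] at hij
    subst hij
    show _ ≫ (Zc X Y).d i (i+1) = X.d i (i+1) ≫ _
    rw [Zc_d]
    match i with
    | Int.ofNat 0 =>
        show 𝟙 (X.X 0) ≫ (0 : _) = X.d (Int.ofNat 0) (Int.ofNat 1) ≫ f.f (Int.ofNat 1)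
        have : f.f (Int.ofNat 1) = 0 := h₄.eq_of_tgt _ _
        rw [this]; simp
    | Int.ofNat (n+1) =>
        show f.f (Int.ofNat (n+1)) ≫ Y.d (Int.ofNat (n+1)) (Int.ofNat (n+2)) =
          X.d (Int.ofNat (n+1)) (Int.ofNat (n+2)) ≫ f.f (Int.ofNat (n+2))
        exact f.comm _ _
    | Int.negSucc 0 =>
        show 𝟙 _ ≫ X.d (Int.negSucc 0) (Int.ofNat 0) =
          X.d (Int.negSucc 0) (Int.ofNat 0) ≫ 𝟙 (X.X (Int.ofNat 0))
        simp
    | Int.negSucc (n+1) =>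
        show 𝟙 _ ≫ X.d (Int.negSucc (n+1)) (Int.negSucc n) =
          X.d (Int.negSucc (n+1)) (Int.negSucc n) ≫ 𝟙 (X.X (Int.negSucc n))
        simp

def hmap (h₄ : IsZero (Y.X 1)) : Zc X Y ⟶ Y where
  f i := match i with
    | Int.ofNat 0 => f.f 0
    | Int.ofNat (n+1) => 𝟙 (Y.X (Int.ofNat (n+1)))
    | Int.negSucc n => f.f (Int.negSucc n)
  comm' i j hij := by
    simp only [ComplexShape.up_Rel] at hij
    subst hij
    show _ ≫ Y.d i (i+1) = (Zc X Y).d i (i+1) ≫ _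
    rw [Zc_d]
    match i with
    | Int.ofNat 0 =>
        show f.f (Int.ofNat 0) ≫ Y.d (Int.ofNat 0) (Int.ofNat 1) =
          (0 : _) ≫ 𝟙 (Y.X (Int.ofNat 1))
        have : Y.d (Int.ofNat 0) (Int.ofNat 1) = 0 := h₄.eq_of_tgt _ _
        rw [this]; simp
    | Int.ofNat (n+1) =>
        show 𝟙 _ ≫ Y.d (Int.ofNat (n+1)) (Int.ofNat (n+2)) =
          Y.d (Int.ofNat (n+1)) (Int.ofNat (n+2)) ≫ 𝟙 (Y.X (Int.ofNat (n+2)))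
        simp
    | Int.negSucc 0 =>
        show f.f (Int.negSucc 0) ≫ Y.d (Int.negSucc 0) (Int.ofNat 0) =
          X.d (Int.negSucc 0) (Int.ofNat 0) ≫ f.f (Int.ofNat 0)
        exact f.comm _ _
    | Int.negSucc (n+1) =>
        show f.f (Int.negSucc (n+1)) ≫ Y.d (Int.negSucc (n+1)) (Int.negSucc n) =
          X.d (Int.negSucc (n+1)) (Int.negSucc n) ≫ f.f (Int.negSucc n)
        exact f.comm _ _

lemma fact (h₄ : IsZero (Y.X 1)) : f = gmap X Y f h₄ ≫ hmap X Y f h₄ := by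
  apply HomologicalComplex.hom_ext
  intro i
  rw [HomologicalComplex.comp_f]
  match i with
  | Int.ofNat 0 =>
      show f.f (Int.ofNat 0) = 𝟙 (X.X 0) ≫ f.f (Int.ofNat 0); simp
  | Int.ofNat (n+1) =>
      show f.f (Int.ofNat (n+1)) = f.f (Int.ofNat (n+1)) ≫ 𝟙 _; simp
  | Int.negSucc n =>
      show f.f (Int.negSucc n) = 𝟙 _ ≫ f.f (Int.negSucc n); simp

end Aux


theorem not_irreducible
    {k Λ : Type} [Field k] [Ring Λ] [Algebra k Λ] [FiniteDimensional k Λ]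
    (X Y : Cplx Λ) (hX : IsMinimalProjective X) (hY : IsMinimalProjective Y)
    (f : X ⟶ Y) (t : ℤ) (ht : 0 < t)
    (h₁ : ∀ j : ℤ, j < -t → IsZero (X.X j))
    (h₂ : ¬ IsZero (X.X 1))
    (h₃ : ¬ IsZero (Y.X (-(t + 1))))
    (h₄ : IsZero (Y.X 1)) :
    ¬ IrreducibleC f := by
  rintro ⟨-, -, hfac⟩
  rcases hfac (Zc X Y) (Zc_min X Y hX hY) (gmap X Y f h₄) (hmap X Y f h₄)
      (fact X Y f h₄) with hg | hh
  · apply h₂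
    rw [IsZero.iff_id_eq_zero]
    have h5 : gmap X Y f h₄ ≫ retraction (gmap X Y f h₄) = 𝟙 X := IsSplitMono.id _
    have h6 := congrArg (fun φ => HomologicalComplex.Hom.f φ 1) h5
    simp only [HomologicalComplex.comp_f, HomologicalComplex.id_f] at h6
    have hz1 : IsZero ((Zc X Y).X 1) := h₄
    have h7 : (gmap X Y f h₄).f 1 = 0 := hz1.eq_of_tgt _ _
    rw [h7, zero_comp] at h6
    exact h6.symm
  · apply h₃
    rw [IsZero.iff_id_eq_zero]
    have hz : IsZero ((Zc X Y).X (-(t + 1))) := by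
      rw [show (Zc X Y).X (-(t + 1)) = X.X (-(t + 1)) from
        Zobj_nonpos X Y _ (by omega)]
      exact h₁ _ (by omega)
    have h5 : CategoryTheory.section_ (hmap X Y f h₄) ≫ hmap X Y f h₄ = 𝟙 Y :=
      IsSplitEpi.id _
    have h6 := congrArg (fun φ => HomologicalComplex.Hom.f φ (-(t + 1))) h5
    simp only [HomologicalComplex.comp_f, HomologicalComplex.id_f] at h6
    have h7 : (hmap X Y f h₄).f (-(t + 1)) = 0 := hz.eq_of_src _ _
    rw [h7, comp_zero] at h6
    exact h6.symm

end ARShapes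
end

section
/- Let X →u Y →v Z →w X[1] be an Auslander–Reiten triangle in K_I(P), where u and v denote chain-map representatives in C_I(P). If u is smonic, then v is sepic. -/
/-! Statement 10: Theorem 1(a) of the paper. -/

open CategoryTheory CategoryTheory.Limits CategoryTheory.Pretriangulated

namespace ARShapes

variable {Λ : Type} [Ring Λ]

/-- An object of a preadditive category is indecomposable if it is nonzero and, whenever it is
exhibited as a biproduct of two objects (via inclusions and projections satisfying the biproduct
identities), one of the two summands is zero. -/
def Indecomposable {K : Type*} [Category K] [Preadditive K] (Z : K) : Prop :=
  ¬ IsZero Z ∧ ∀ (A B : K) (i : A ⟶ Z) (j : B ⟶ Z) (p : Z ⟶ A) (q : Z ⟶ B),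
    i ≫ p = 𝟙 A → j ≫ q = 𝟙 B → i ≫ q = 0 → j ≫ p = 0 → p ≫ i + q ≫ j = 𝟙 Z →
    IsZero A ∨ IsZero B

/-- The quotient functor from minimal projective complexes to the homotopy category
`K_I(P)` (realized inside the homotopy category of all complexes, of which `K_I(P)` is a full
subcategory; in particular distinguished triangles, isomorphisms, split epimorphisms and
zero-ness of morphisms in `K_I(P)` agree with those in the ambient homotopy category). -/
noncomputable abbrev Q (Λ : Type) [Ring Λ] :
    Cplx Λ ⥤ HomotopyCategory (ModuleCat Λᵐᵒᵖ) (ComplexShape.up ℤ) :=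
  HomotopyCategory.quotient (ModuleCat Λᵐᵒᵖ) (ComplexShape.up ℤ)

/-- `X →u Y →v Z →w X[1]` is an Auslander-Reiten triangle in `K_I(P)`: it is a distinguished
triangle, the end terms `X` and `Z` are indecomposable, the connecting morphism `w` is nonzero,
and every morphism `W → Z` from an object of `K_I(P)` that is not a split epimorphism factors
through `v`. -/
def IsARTriangle {X Y Z : Cplx Λ} (u : X ⟶ Y) (v : Y ⟶ Z)
    (w : (Q Λ).obj Z ⟶ ((Q Λ).obj X)⟦(1 : ℤ)⟧) : Prop :=
  (Triangle.mk ((Q Λ).map u) ((Q Λ).map v) w ∈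
    distTriang (HomotopyCategory (ModuleCat Λᵐᵒᵖ) (ComplexShape.up ℤ))) ∧
  Indecomposable ((Q Λ).obj X) ∧ Indecomposable ((Q Λ).obj Z) ∧ w ≠ 0 ∧
  ∀ (W : Cplx Λ), IsMinimalProjective W →
    ∀ (φ : (Q Λ).obj W ⟶ (Q Λ).obj Z), ¬ IsSplitEpi φ →
      ∃ ψ : (Q Λ).obj W ⟶ (Q Λ).obj Y, ψ ≫ (Q Λ).map v = φ


section NoncommNakayama
open Ideal Submodule

theorem jacmul {R : Type*} [Ring R] {x : R} (hx : x ∈ Ideal.jacobson (⊥ : Ideal R)) (r : R) :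
    x * r ∈ Ideal.jacobson (⊥ : Ideal R) := by
  rw [Ideal.mem_jacobson_iff] at hx ⊢
  intro y
  obtain ⟨u, hu⟩ := hx (r * y)
  rw [Ideal.mem_bot] at hu
  refine ⟨1 - y * x * u * r, ?_⟩
  rw [Ideal.mem_bot]
  have hu' : u * (r * y) * x + u = 1 := by
    have h2 : u * (r * y) * x + u - 1 = 0 := hu
    linear_combination (norm := noncomm_ring) h2
  have expand : (1 - y*x*u*r) * y * (x*r) + (1 - y*x*u*r) - 1
      = y*x*r - y*x*(u*(r*y)*x + u)*r := by noncomm_ring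
  rw [expand, hu', mul_one, sub_self]

variable {R : Type*} [Ring R] {M : Type*} [AddCommGroup M] [Module R M]

def jspan (s : Finset M) : Submodule R M where
  carrier := {x | ∃ f : M → R, (∀ m, f m ∈ Ideal.jacobson (⊥ : Ideal R)) ∧ ∑ m ∈ s, f m • m = x}
  add_mem' := by
    rintro a b ⟨f, hf, rfl⟩ ⟨g, hg, rfl⟩
    exact ⟨f + g, fun m => add_mem (hf m) (hg m), by simp [add_smul, Finset.sum_add_distrib]⟩
  zero_mem' := ⟨0, by simp, by simp⟩
  smul_mem' := by
    rintro c a ⟨f, hf, rfl⟩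
    exact ⟨fun m => c * f m, fun m => Ideal.mul_mem_left _ _ (hf m),
      by simp [mul_smul, Finset.smul_sum]⟩

theorem nakayama_aux (N : Submodule R M) :
    ∀ (n : ℕ) (s : Finset M), s.card = n → N ⊔ Submodule.span R (s : Set M) = ⊤ →
    (⊤ : Submodule R M) ≤ N ⊔ (Ideal.jacobson (⊥ : Ideal R)) • (⊤ : Submodule R M) → N = ⊤ := by
  intro n
  induction n with
  | zero =>
    intro s hcard hs _
    rw [Finset.card_eq_zero] at hcard
    subst hcard
    simpa using hs
  | succ k ih =>
    intro s hcard hs h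
    classical
    obtain ⟨m, hm⟩ : s.Nonempty := Finset.card_pos.mp (by omega)
    have hJ : (Ideal.jacobson (⊥ : Ideal R)) • (⊤ : Submodule R M) ≤ N ⊔ jspan s := by
      rw [Submodule.smul_le]
      intro a ha x _
      have hx' : x ∈ N ⊔ Submodule.span R (s : Set M) := hs ▸ Submodule.mem_top
      obtain ⟨y, hy, z, hz, rfl⟩ := Submodule.mem_sup.mp hx'
      obtain ⟨c, -, rfl⟩ := mem_span_finset.mp hz
      rw [smul_add]
      refine Submodule.add_mem _ (Submodule.mem_sup_left (N.smul_mem a hy))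
        (Submodule.mem_sup_right ⟨fun m => a * c m, fun m => jacmul ha _, ?_⟩)
      rw [Finset.smul_sum]
      simp [mul_smul]
    have hmem : m ∈ N ⊔ jspan s :=
      (sup_le le_sup_left hJ : N ⊔ _ ≤ _) (h Submodule.mem_top)
    obtain ⟨y, hy, z, ⟨f, hf, rfl⟩, hmz⟩ := Submodule.mem_sup.mp hmem
    have hsum' : (∑ i ∈ s, f i • i) = f m • m + ∑ i ∈ s.erase m, f i • i :=
      (Finset.add_sum_erase s (fun i => f i • i) hm).symm
    set a := f m • m with ha
    set T := ∑ i ∈ s.erase m, f i • i with hT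
    have key : (1 - f m) • m ∈ N ⊔ Submodule.span R ((s.erase m : Finset M) : Set M) := by
      have h1 : y + (a + T) = m := by rw [← hsum']; exact hmz
      have h2 : y + T + a = m := by rw [← h1]; abel
      have h3 : (1 - f m) • m = m - a := by rw [sub_smul, one_smul, ← ha]
      have hval : (1 - f m) • m = y + T := by rw [h3]; exact (eq_sub_of_add_eq h2).symm
      rw [hval, hT]
      exact Submodule.add_mem _ (Submodule.mem_sup_left hy)
        (Submodule.mem_sup_right (Submodule.sum_mem _ fun i hi =>
          Submodule.smul_mem _ _ (Submodule.subset_span hi)))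
    obtain ⟨u, hu⟩ := Ideal.exists_mul_sub_mem_of_sub_one_mem_jacobson (1 - f m)
      (by simpa using neg_mem (hf m))
    rw [Ideal.mem_bot, sub_eq_zero] at hu
    have hm_mem : m ∈ N ⊔ Submodule.span R ((s.erase m : Finset M) : Set M) := by
      have := Submodule.smul_mem _ u key
      rwa [← mul_smul, hu, one_smul] at this
    refine ih (s.erase m) (by rw [Finset.card_erase_of_mem hm]; omega) ?_ h
    refine top_le_iff.mp ?_
    rw [← hs]
    refine sup_le le_sup_left (Submodule.span_le.mpr fun i hi => ?_)
    rcases eq_or_ne i m with rfl | hne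
    · exact hm_mem
    · exact Submodule.mem_sup_right (Submodule.subset_span (Finset.mem_erase.mpr ⟨hne, hi⟩))

theorem nakayama_sup (N : Submodule R M) [Module.Finite R M]
    (h : N ⊔ (Ideal.jacobson (⊥ : Ideal R)) • (⊤ : Submodule R M) = ⊤) : N = ⊤ := by
  obtain ⟨s, hs⟩ := Module.Finite.fg_top (R := R) (M := M)
  exact nakayama_aux N s.card s rfl (by rw [hs, sup_top_eq]) (by rw [h])

end NoncommNakayama
variable {X Y : Cplx Λ}

lemma comm_apply (u : X ⟶ Y) (i j : ℤ) (x : X.X i) :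
    Y.d i j (u.f i x) = u.f j (X.d i j x) := by
  have h := u.comm i j
  exact (congrArg (fun (φ : X.X i ⟶ Y.X j) => φ x) h :)

/-- The degreewise quotient complex `Y / u(X)`. -/
noncomputable def QuotCplx (u : X ⟶ Y) : Cplx Λ where
  X i := ModuleCat.of Λᵐᵒᵖ (Y.X i ⧸ LinearMap.range (u.f i).hom)
  d i j := ModuleCat.ofHom (Submodule.mapQ _ _ (Y.d i j).hom (by
    rintro _ ⟨x, rfl⟩
    exact ⟨X.d i j x, (comm_apply u i j x).symm⟩))
  shape i j hij := by
    apply ModuleCat.hom_ext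
    apply Submodule.linearMap_qext
    ext x
    simp [Y.shape i j hij]
  d_comp_d' i j k _ _ := by
    apply ModuleCat.hom_ext
    apply Submodule.linearMap_qext
    ext x
    have hd : Y.d j k (Y.d i j x) = 0 := by
      have h2 := congrArg (fun (φ : Y.X i ⟶ Y.X k) => φ x) (Y.d_comp_d i j k)
      exact h2
    exact (congrArg (Submodule.Quotient.mk (p := LinearMap.range (u.f k).hom)) hd).trans
      ((LinearMap.range (u.f k).hom).mkQ.map_zero)

/-- The projection chain map `Y ⟶ Y/u(X)`. -/
noncomputable def quotPi (u : X ⟶ Y) : Y ⟶ QuotCplx u where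
  f i := ModuleCat.ofHom (LinearMap.range (u.f i).hom).mkQ
  comm' i j _ := by
    apply ModuleCat.hom_ext
    apply LinearMap.ext
    intro y
    rfl

lemma quotPi_surjective (u : X ⟶ Y) (i : ℤ) : Function.Surjective ((quotPi u).f i) :=
  Submodule.mkQ_surjective (LinearMap.range (u.f i).hom)

/-- The short complex `X ⟶ Y ⟶ Y/u(X)`. -/
noncomputable def quotSC (u : X ⟶ Y) : ShortComplex (Cplx Λ) :=
  ShortComplex.mk u (quotPi u) (by
    ext i x
    show Submodule.Quotient.mk (p := LinearMap.range (u.f i).hom) (u.f i x) = 0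
    simpa using Submodule.Quotient.mk_eq_zero _ |>.mpr ⟨x, rfl⟩)

/-- Degreewise splittings of `quotSC`, given that `u` is smonic. -/
noncomputable def quotSplitting (u : X ⟶ Y) (hu : ∀ i, IsSplitMono (u.f i)) (n : ℤ) :
    ((quotSC u).map (HomologicalComplex.eval _ _ n)).Splitting := by
  haveI : IsSplitMono ((quotSC u).map (HomologicalComplex.eval _ _ n)).f := hu n
  refine ShortComplex.Splitting.ofExactOfRetraction _
    (ShortComplex.moduleCat_exact_iff _ |>.mpr ?_) (retraction _) (IsSplitMono.id _) ?_
  · intro x₂ hx₂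
    have : x₂ ∈ LinearMap.range (u.f n).hom := by
      exact (Submodule.Quotient.mk_eq_zero _ (x := x₂)).mp hx₂
    exact this
  · rw [ModuleCat.epi_iff_surjective]
    exact quotPi_surjective u n


open Submodule in
lemma mem_rad_map {R : Type*} [Ring R] {M N : ModuleCat R} (h : M ⟶ N) {m : M}
    (hm : m ∈ (Ideal.jacobson (⊥ : Ideal R)) • (⊤ : Submodule R M)) :
    h m ∈ (Ideal.jacobson (⊥ : Ideal R)) • (⊤ : Submodule R N) := by
  have h1 : h m ∈ Submodule.map h.hom ((Ideal.jacobson (⊥ : Ideal R)) • ⊤) :=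
    Submodule.mem_map_of_mem hm
  rw [Submodule.map_smul''] at h1
  exact Submodule.smul_mono le_rfl le_top h1

lemma homotopy_sub_mem {A B : Cplx Λ} {f g : A ⟶ B} (H : Homotopy f g)
    (hA : ∀ i : ℤ, LinearMap.range (A.d i (i + 1)).hom ≤
      (Ideal.jacobson (⊥ : Ideal Λᵐᵒᵖ)) • (⊤ : Submodule Λᵐᵒᵖ (A.X (i + 1))))
    (hB : ∀ i : ℤ, LinearMap.range (B.d i (i + 1)).hom ≤
      (Ideal.jacobson (⊥ : Ideal Λᵐᵒᵖ)) • (⊤ : Submodule Λᵐᵒᵖ (B.X (i + 1))))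
    (i : ℤ) (x : A.X i) :
    f.f i x - g.f i x ∈ (Ideal.jacobson (⊥ : Ideal Λᵐᵒᵖ)) • (⊤ : Submodule Λᵐᵒᵖ (B.X i)) := by
  have hc := H.comm i
  have hx := congrArg (fun (φ : A.X i ⟶ B.X i) => φ x) hc
  dsimp only at hx
  rw [dNext_eq H.hom (show (ComplexShape.up ℤ).Rel i (i+1) by simp),
      prevD_eq H.hom (show (ComplexShape.up ℤ).Rel (i-1) i by simp)] at hx
  have hsub : f.f i x - g.f i x
      = H.hom (i+1) i (A.d i (i+1) x) + B.d (i-1) i (H.hom i (i-1) x) := by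
    rw [sub_eq_iff_eq_add, hx]; rfl
  rw [hsub]
  refine Submodule.add_mem _ (mem_rad_map _ (hA i ⟨x, rfl⟩)) ?_
  have hB' := hB (i-1)
  rw [show (i - 1) + 1 = i by omega] at hB'
  exact hB' ⟨H.hom i (i-1) x, rfl⟩

open Submodule in
lemma range_sup_rad_eq_top {R : Type*} [Ring R] {M N : ModuleCat R} (f g : M ⟶ N)
    (hfg : ∀ x, f x - g x ∈ (Ideal.jacobson (⊥ : Ideal R)) • (⊤ : Submodule R N))
    (hg : LinearMap.range g.hom ⊔ (Ideal.jacobson (⊥ : Ideal R)) • ⊤ = ⊤) :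
    LinearMap.range f.hom ⊔ (Ideal.jacobson (⊥ : Ideal R)) • ⊤ = ⊤ := by
  rw [eq_top_iff] at hg ⊢
  intro n hn
  obtain ⟨y, ⟨m, rfl⟩, z, hz, rfl⟩ := Submodule.mem_sup.mp (hg hn)
  have hgm : g m = f m - (f m - g m) := by abel
  rw [hgm]
  exact Submodule.add_mem _
    (Submodule.sub_mem _ (Submodule.mem_sup_left ⟨m, rfl⟩) (Submodule.mem_sup_right (hfg m)))
    (Submodule.mem_sup_right hz)

set_option maxHeartbeats 1000000 in
/-- In an Auslander-Reiten triangle `X →u Y →v Z →w X[1]` in `K_I(P)`,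
if `u` is smonic then `v` is sepic. -/
theorem sepic_of_AR_smonic
    {k Λ : Type} [Field k] [Ring Λ] [Algebra k Λ] [FiniteDimensional k Λ]
    (X Y Z : Cplx Λ)
    (hX : IsMinimalProjective X) (hY : IsMinimalProjective Y) (hZ : IsMinimalProjective Z)
    (u : X ⟶ Y) (v : Y ⟶ Z) (w : (Q Λ).obj Z ⟶ ((Q Λ).obj X)⟦(1 : ℤ)⟧)
    (hAR : IsARTriangle u v w) (hu : Smonic u) :
    Sepic v := by
  have hT := hAR.1
  set S := quotSC u with hS
  set σ := quotSplitting u hu with hσ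
  have hT₂ : CochainComplex.trianglehOfDegreewiseSplit S σ ∈
      distTriang (HomotopyCategory (ModuleCat Λᵐᵒᵖ) (ComplexShape.up ℤ)) := by
    rw [HomotopyCategory.distinguished_iff_iso_trianglehOfDegreewiseSplit]
    exact ⟨S, σ, ⟨Iso.refl _⟩⟩
  let e := Pretriangulated.isoTriangleOfIso₁₂ _ _ hT hT₂ (Iso.refl ((Q Λ).obj X))
    (Iso.refl ((Q Λ).obj Y)) (by exact (Category.comp_id ((Q Λ).map u)).trans (Category.id_comp ((Q Λ).map u)).symm)
  have hcomm : (Q Λ).map v ≫ e.hom.hom₃ = (Q Λ).map (quotPi u) := by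
    have h2 := e.hom.comm₂
    have hh2 : e.hom.hom₂ = 𝟙 _ := by
      exact Pretriangulated.isoTriangleOfIso₁₂_hom_hom₂ _ _ _ _ _ _ _
    rw [hh2] at h2
    exact h2.trans (Category.id_comp _)
  obtain ⟨gg, hg⟩ := (Q Λ).map_surjective
    (show (Q Λ).obj (QuotCplx u) ⟶ (Q Λ).obj Z from e.inv.hom₃)
  obtain ⟨ff, hf⟩ := (Q Λ).map_surjective
    (show (Q Λ).obj Z ⟶ (Q Λ).obj (QuotCplx u) from e.hom.hom₃)
  have hee : e.hom.hom₃ ≫ e.inv.hom₃ = 𝟙 _ := by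
    have h3 := congrArg (fun (α : Triangle.mk ((Q Λ).map u) ((Q Λ).map v) w ⟶ _) => α.hom₃)
      e.hom_inv_id
    exact h3
  have hfg : (Q Λ).map (ff ≫ gg) = (Q Λ).map (𝟙 Z) := by
    rw [Functor.map_comp, hf, hg, CategoryTheory.Functor.map_id]
    exact hee
  have H1 : Homotopy (ff ≫ gg) (𝟙 Z) := HomotopyCategory.homotopyOfEq _ _ hfg
  have Hvg : (Q Λ).map (quotPi u ≫ gg) = (Q Λ).map v := by
    rw [Functor.map_comp, hg, ← hcomm]
    exact (Category.assoc _ _ _).trans ((congrArg (fun t => (Q Λ).map v ≫ t) hee).trans (Category.comp_id _))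
  have H2 : Homotopy (quotPi u ≫ gg) v := HomotopyCategory.homotopyOfEq _ _ Hvg
  intro i
  haveI := hZ.1 i
  haveI := hZ.2.1 i
  have hfgi : ∀ x, (ff ≫ gg).f i x - (𝟙 Z : Z ⟶ Z).f i x ∈
      (Ideal.jacobson (⊥ : Ideal Λᵐᵒᵖ)) • (⊤ : Submodule Λᵐᵒᵖ (Z.X i)) :=
    fun x => homotopy_sub_mem H1 hZ.2.2 hZ.2.2 i x
  have hid : LinearMap.range ((𝟙 Z : Z ⟶ Z).f i).hom ⊔
      (Ideal.jacobson (⊥ : Ideal Λᵐᵒᵖ)) • (⊤ : Submodule Λᵐᵒᵖ (Z.X i)) = ⊤ := by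
    have h0 : LinearMap.range ((𝟙 Z : Z ⟶ Z).f i).hom = ⊤ :=
      LinearMap.range_eq_top.mpr (fun y => ⟨y, rfl⟩)
    rw [h0, top_sup_eq]
  have sup1 := range_sup_rad_eq_top ((ff ≫ gg).f i) ((𝟙 Z : Z ⟶ Z).f i) hfgi hid
  have sup2 : LinearMap.range (gg.f i).hom ⊔
      (Ideal.jacobson (⊥ : Ideal Λᵐᵒᵖ)) • (⊤ : Submodule Λᵐᵒᵖ (Z.X i)) = ⊤ := by
    refine le_antisymm le_top ?_
    conv_lhs => rw [← sup1]
    refine sup_le_sup_right ?_ _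
    rw [HomologicalComplex.comp_f, ModuleCat.hom_comp]
    exact LinearMap.range_comp_le_range _ _
  have sup3 : LinearMap.range ((quotPi u ≫ gg).f i).hom ⊔
      (Ideal.jacobson (⊥ : Ideal Λᵐᵒᵖ)) • (⊤ : Submodule Λᵐᵒᵖ (Z.X i)) = ⊤ := by
    rw [HomologicalComplex.comp_f, ModuleCat.hom_comp, LinearMap.range_comp]
    have h1 : LinearMap.range ((quotPi u).f i).hom = ⊤ :=
      LinearMap.range_eq_top.mpr (quotPi_surjective u i)
    rw [h1, Submodule.map_top]
    exact sup2
  have sup4 := range_sup_rad_eq_top (v.f i) ((quotPi u ≫ gg).f i)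
    (fun x => by
      have hh := homotopy_sub_mem H2 hY.2.2 hZ.2.2 i x
      rw [← neg_sub]
      exact neg_mem hh) sup3
  have htop : LinearMap.range (v.f i).hom = ⊤ := nakayama_sup _ sup4
  obtain ⟨sec, hsec⟩ := Module.projective_lifting_property (v.f i).hom
    (LinearMap.id) (LinearMap.range_eq_top.mp htop)
  exact ⟨⟨⟨ModuleCat.ofHom sec, ModuleCat.hom_ext hsec⟩⟩⟩


end ARShapes
end
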